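/- Let ℓ ≥ 2 be an integer and let G be the ℓ×ℓ grid graph. Let E* be a set of vertical edges of G, each lying in a column j with 1 < j < ℓ, such that whenever the vertical edge joining (i,j) and (i+1,j) belongs to E*, the vertical edge joining (i,j+1) and (i+1,j+1) does not belong to E*. Let G' be the graph obtained from G by deleting the edges of E*. Let P₁,…,P_k be paths in G, where P_m connects s_m to t_m, such that for every two distinct paths P_m, P_{m'}, every vertex of P_m is at graph distance at least 2 in G from every vertex of P_{m'}, and every path is internally disjoint from the boundary of G. Then there exist pairwise vertex-disjoint paths P'₁,…,P'_k in G' such that P'_m connects s_m to t_m for every 1 ≤ m ≤ k. -/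

import Mathlib

/-- The `ℓ × ℓ` grid graph: vertices `(i,j)` with `0 ≤ i,j < ℓ` (0-indexed), and an edge
between `(i,j)` and `(i',j')` iff `|i-i'| + |j-j'| = 1`. -/
def gridGraph (ℓ : ℕ) : SimpleGraph (Fin ℓ × Fin ℓ) where
  Adj a b := ((a.1 : ℤ) - (b.1 : ℤ)).natAbs + ((a.2 : ℤ) - (b.2 : ℤ)).natAbs = 1
  symm := ⟨by intro a b h; omega⟩
  loopless := ⟨by intro a h; simp at h⟩

/-- The vertical edge of the `ℓ × ℓ` grid joining `(i,j)` and `(i+1,j)` (0-indexed). -/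
def vEdge (ℓ i j : ℕ) (hi : i + 1 < ℓ) (hj : j < ℓ) : Sym2 (Fin ℓ × Fin ℓ) :=
  s((⟨i, by omega⟩, ⟨j, hj⟩), (⟨i + 1, hi⟩, ⟨j, hj⟩))

/-- A vertex of the `ℓ × ℓ` grid lies on the boundary iff one of its coordinates is `0`
or `ℓ - 1`. -/
def onGridBoundary (ℓ : ℕ) (v : Fin ℓ × Fin ℓ) : Prop :=
  (v.1 : ℕ) = 0 ∨ (v.1 : ℕ) = ℓ - 1 ∨ (v.2 : ℕ) = 0 ∨ (v.2 : ℕ) = ℓ - 1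

-- edges in Estar have equal second coordinates
lemma estar_vert {ℓ : ℕ} {Estar : Set (Sym2 (Fin ℓ × Fin ℓ))}
    (hvert : ∀ e ∈ Estar, ∃ (i j : ℕ) (hi : i + 1 < ℓ) (hj0 : 0 < j) (hj : j + 1 < ℓ),
        e = vEdge ℓ i j hi (Nat.lt_of_succ_lt hj))
    {a c : Fin ℓ × Fin ℓ} (hne : a.2 ≠ c.2) : s(a,c) ∉ Estar := by
  intro hm
  obtain ⟨i, j, hi, hj0, hj, he⟩ := hvert _ hm
  rw [vEdge, Sym2.eq_iff] at he
  rcases he with ⟨h1, h2⟩ | ⟨h1, h2⟩ <;>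
  · apply hne
    rw [h1, h2]

lemma reroute {ℓ : ℕ} {Estar : Set (Sym2 (Fin ℓ × Fin ℓ))}
    (hvert : ∀ e ∈ Estar, ∃ (i j : ℕ) (hi : i + 1 < ℓ) (hj0 : 0 < j) (hj : j + 1 < ℓ),
        e = vEdge ℓ i j hi (Nat.lt_of_succ_lt hj))
    (halt : ∀ (i j : ℕ) (hi : i + 1 < ℓ) (hj : j + 1 < ℓ),
        vEdge ℓ i j hi (Nat.lt_of_succ_lt hj) ∈ Estar → vEdge ℓ i (j + 1) hi hj ∉ Estar)
    {a b : Fin ℓ × Fin ℓ} (w : (gridGraph ℓ).Walk a b) :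
    ∃ w' : ((gridGraph ℓ).deleteEdges Estar).Walk a b,
      ∀ v ∈ w'.support, v ∈ w.support ∨
        ∃ u ∈ w.support, v.1 = u.1 ∧ (v.2 : ℕ) = (u.2 : ℕ) + 1 := by
  induction w with
  | nil => exact ⟨.nil, by simp⟩
  | @cons u v b h w ih =>
    obtain ⟨w'', hw''⟩ := ih
    by_cases hE : s(u,v) ∈ Estar
    · -- deleted vertical edge: detour through the next column
      obtain ⟨i, j, hi, hj0, hj, he⟩ := hvert _ hE
      have hj' : j + 1 < ℓ := hj
      rw [vEdge, Sym2.eq_iff] at he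
      -- column of u and v is j, rows are i, i+1 in some order
      have hcol : (u.2 : ℕ) = j ∧ (v.2 : ℕ) = j ∧
          (((u.1 : ℕ) = i ∧ (v.1 : ℕ) = i + 1) ∨ ((u.1 : ℕ) = i + 1 ∧ (v.1 : ℕ) = i)) := by
        rcases he with ⟨h1, h2⟩ | ⟨h1, h2⟩ <;> rw [h1, h2] <;> simp <;> omega
      set u' : Fin ℓ × Fin ℓ := (u.1, ⟨j + 1, hj⟩) with hu'
      set v' : Fin ℓ × Fin ℓ := (v.1, ⟨j + 1, hj⟩) with hv'
      have hEv' : vEdge ℓ i j hi (by omega) ∈ Estar := by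
        rw [vEdge]
        rcases he with ⟨h1, h2⟩ | ⟨h1, h2⟩
        · rw [← h1, ← h2]; exact hE
        · rw [← h1, ← h2, Sym2.eq_swap]; exact hE
      have hnot2 : s(u', v') ∉ Estar := by
        have := halt i j hi hj hEv'
        rw [vEdge] at this
        intro hmem
        apply this
        rcases hcol with ⟨hc1, hc2, ⟨hr1, hr2⟩ | ⟨hr1, hr2⟩⟩
        · have : u' = (⟨i, by omega⟩, ⟨j+1, hj⟩) := by
            rw [hu']; ext <;> simp [hr1]
          have h2 : v' = (⟨i+1, hi⟩, ⟨j+1, hj⟩) := by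
            rw [hv']; ext <;> simp [hr2]
          rwa [this, h2] at hmem
        · have : u' = (⟨i+1, hi⟩, ⟨j+1, hj⟩) := by
            rw [hu']; ext <;> simp [hr1]
          have h2 : v' = (⟨i, by omega⟩, ⟨j+1, hj⟩) := by
            rw [hv']; ext <;> simp [hr2]
          rw [this, h2, Sym2.eq_swap] at hmem
          exact hmem
      have h1 : ((gridGraph ℓ).deleteEdges Estar).Adj u u' := by
        rw [SimpleGraph.deleteEdges_adj]
        constructor
        · show _ = 1
          simp only [hu']
          have := hcol.1
          omega
        · exact estar_vert hvert (by
            intro hh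
            have : (u.2 : ℕ) = ((u'.2 : ℕ)) := by rw [hh]
            simp [hu'] at this
            omega)
      have h2 : ((gridGraph ℓ).deleteEdges Estar).Adj u' v' := by
        rw [SimpleGraph.deleteEdges_adj]
        refine ⟨?_, hnot2⟩
        show _ = 1
        simp only [hu', hv']
        rcases hcol with ⟨_, _, ⟨hr1, hr2⟩ | ⟨hr1, hr2⟩⟩ <;> simp <;> omega
      have h3 : ((gridGraph ℓ).deleteEdges Estar).Adj v' v := by
        rw [SimpleGraph.deleteEdges_adj]
        constructor
        · show _ = 1
          simp only [hv']
          have := hcol.2.1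
          omega
        · exact estar_vert hvert (by
            intro hh
            have : (v'.2 : ℕ) = ((v.2 : ℕ)) := by rw [hh]
            simp [hv'] at this
            omega)
      refine ⟨.cons h1 (.cons h2 (.cons h3 w'')), ?_⟩
      intro x hx
      simp only [SimpleGraph.Walk.support_cons, List.mem_cons] at hx
      rcases hx with rfl | rfl | rfl | hx
      · left; simp
      · right
        exact ⟨u, by simp, rfl, by simp [hu', hcol.1]⟩
      · right
        refine ⟨v, by simp, rfl, by simp [hv', hcol.2.1]⟩
      · rcases hw'' x hx with hx' | ⟨y, hy, h⟩
        · left; simp [hx']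
        · right; exact ⟨y, by simp [hy], h⟩
    · refine ⟨.cons (by rw [SimpleGraph.deleteEdges_adj]; exact ⟨h, hE⟩) w'', ?_⟩
      intro x hx
      simp only [SimpleGraph.Walk.support_cons, List.mem_cons] at hx
      rcases hx with rfl | hx
      · left; simp
      · rcases hw'' x hx with hx' | ⟨y, hy, hh⟩
        · left; simp [hx']
        · right; exact ⟨y, by simp [hy], hh⟩

/-- Let `ℓ ≥ 2` and let `E*` be a set of vertical edges of the `ℓ × ℓ`
grid, each lying in a column `j` that is neither the first nor the last, such that whenever
the vertical edge joining `(i,j)` and `(i+1,j)` is in `E*`, the vertical edge joining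
`(i,j+1)` and `(i+1,j+1)` is not. If `P₁,…,P_k` are paths in the grid, pairwise at graph
distance at least `2` from one another, and internally disjoint from the grid boundary,
then there are pairwise vertex-disjoint paths in the grid minus `E*` with the same
endpoints. -/
theorem stmt_13 (ℓ : ℕ) (hℓ : 2 ≤ ℓ) (Estar : Set (Sym2 (Fin ℓ × Fin ℓ)))
    (hvert : ∀ e ∈ Estar, ∃ (i j : ℕ) (hi : i + 1 < ℓ) (hj0 : 0 < j) (hj : j + 1 < ℓ),
        e = vEdge ℓ i j hi (by omega))
    (halt : ∀ (i j : ℕ) (hi : i + 1 < ℓ) (hj : j + 1 < ℓ),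
        vEdge ℓ i j hi (by omega) ∈ Estar → vEdge ℓ i (j + 1) hi hj ∉ Estar)
    (k : ℕ) (s t : Fin k → Fin ℓ × Fin ℓ)
    (p : ∀ m, (gridGraph ℓ).Walk (s m) (t m))
    (hpath : ∀ m, (p m).IsPath)
    (hspaced : ∀ m m', m ≠ m' → ∀ u ∈ (p m).support, ∀ v ∈ (p m').support,
        2 ≤ (gridGraph ℓ).dist u v)
    (hbd : ∀ m, ∀ v ∈ (p m).support, v ≠ s m → v ≠ t m → ¬ onGridBoundary ℓ v) :
    ∃ p' : ∀ m, ((gridGraph ℓ).deleteEdges Estar).Walk (s m) (t m),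
      (∀ m, (p' m).IsPath) ∧
      (∀ m m', m ≠ m' → ∀ v ∈ (p' m).support, v ∉ (p' m').support) := by
  choose w hw using fun m => reroute hvert halt (p m)
  refine ⟨fun m => (w m).bypass, fun m => (w m).bypass_isPath, ?_⟩
  intro m m' hmm v hv hv'
  have hN : ∀ n, ∀ x ∈ (w n).bypass.support, x ∈ (p n).support ∨
      ∃ u ∈ (p n).support, x.1 = u.1 ∧ (x.2 : ℕ) = (u.2 : ℕ) + 1 :=
    fun n x hx => hw n x ((w n).support_bypass_subset hx)
  have adj_dist : ∀ x y : Fin ℓ × Fin ℓ, (gridGraph ℓ).Adj x y →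
      (gridGraph ℓ).dist x y ≤ 1 := fun x y h => SimpleGraph.dist_le h.toWalk
  have rn_adj : ∀ x u : Fin ℓ × Fin ℓ, x.1 = u.1 → (x.2 : ℕ) = (u.2 : ℕ) + 1 →
      (gridGraph ℓ).Adj x u := by
    intro x u h1 h2
    show _ = 1
    rw [h1]
    omega
  rcases hN m v hv with hvm | ⟨u1, hu1, ha1, hb1⟩ <;>
    rcases hN m' v hv' with hvm' | ⟨u2, hu2, ha2, hb2⟩
  · have := hspaced m m' hmm v hvm v hvm'
    simp [SimpleGraph.dist_self] at this
  · have h2 := hspaced m m' hmm v hvm u2 hu2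
    have := adj_dist v u2 (rn_adj v u2 ha2 hb2)
    omega
  · have h2 := hspaced m m' hmm u1 hu1 v hvm'
    have := adj_dist u1 v ((rn_adj v u1 ha1 hb1).symm)
    omega
  · have hu : u1 = u2 := by
      ext
      · omega
      · omega
    have := hspaced m m' hmm u1 hu1 u2 hu2
    rw [hu] at this
    simp [SimpleGraph.dist_self] at this
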